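/- arXiv:1812.03561 — 8 statements merged into one kernel-verified Lean document; each statement's English description precedes it below -/
import Mathlib

section
/- Let X, Y, Z be real Banach spaces, let U be a nonempty open subset of X and V an open subset of Y. Suppose g : U → V is continuous, x ∈ U, v ∈ X, and g has a one-sided directional derivative g′₊(x,v) at x in the direction v (i.e., (g(x+tv) − g(x))/t converges as t → 0⁺). Suppose f : V → Z is Lipschitz on V. Then the derived set of f ∘ g at x in the direction v equals the derived set of f at g(x) in the direction g′₊(x,v): 𝒟(f∘g)(x,v) = 𝒟f(g(x), g′₊(x,v)). -/
open Filter Topology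

/-- The derived set of `f` at `y` in the direction `v`: all limits of difference quotients
`(f (y + tₙ • v) - f y) / tₙ` along sequences of positive reals `tₙ → 0`. -/
def dirDerivedSet {W Z : Type*} [NormedAddCommGroup W] [NormedSpace ℝ W]
    [NormedAddCommGroup Z] [NormedSpace ℝ Z] (f : W → Z) (y v : W) : Set Z :=
  {a | ∃ t : ℕ → ℝ, (∀ n, 0 < t n) ∧ Tendsto t atTop (𝓝 0) ∧
    Tendsto (fun n => (t n)⁻¹ • (f (y + t n • v) - f y)) atTop (𝓝 a)}

/-- Chain rule for derived sets (Maleva–Preiss): if `g` is continuous on `U` and has a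
one-sided directional derivative `D` at `x` in direction `v`, and `f` is Lipschitz on `V`,
then `𝒟(f ∘ g)(x, v) = 𝒟 f(g x, D)`. -/
theorem dirDerivedSet_comp_eq
    {X Y Z : Type*} [NormedAddCommGroup X] [NormedSpace ℝ X] [CompleteSpace X]
    [NormedAddCommGroup Y] [NormedSpace ℝ Y] [CompleteSpace Y]
    [NormedAddCommGroup Z] [NormedSpace ℝ Z] [CompleteSpace Z]
    {U : Set X} {V : Set Y} (hU : IsOpen U) (hUne : U.Nonempty) (hV : IsOpen V)
    (g : X → Y) (f : Y → Z)
    (hgc : ContinuousOn g U) (hgUV : Set.MapsTo g U V)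
    {x : X} (hx : x ∈ U) (v : X) (D : Y)
    (hD : Tendsto (fun t : ℝ => t⁻¹ • (g (x + t • v) - g x)) (𝓝[>] 0) (𝓝 D))
    {K : NNReal} (hf : LipschitzOnWith K f V) :
    dirDerivedSet (f ∘ g) x v = dirDerivedSet f (g x) D := by
  have hgxV : g x ∈ V := hgUV hx
  set q1 : ℝ → Z := fun t => t⁻¹ • (f (g (x + t • v)) - f (g x)) with hq1
  set q2 : ℝ → Z := fun t => t⁻¹ • (f (g x + t • D) - f (g x)) with hq2
  -- main estimate: q1 - q2 → 0 along 𝓝[>] 0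
  have hU' : ∀ᶠ t in 𝓝[>] (0:ℝ), x + t • v ∈ U := by
    have hc : Tendsto (fun t : ℝ => x + t • v) (𝓝[>] 0) (𝓝 x) := by
      have : Tendsto (fun t : ℝ => x + t • v) (𝓝 0) (𝓝 (x + (0:ℝ) • v)) :=
        (continuous_const.add (continuous_id.smul continuous_const)).tendsto 0
      simpa using this.mono_left nhdsWithin_le_nhds
    exact hc (hU.mem_nhds hx)
  have hV' : ∀ᶠ t in 𝓝[>] (0:ℝ), g x + t • D ∈ V := by
    have hc : Tendsto (fun t : ℝ => g x + t • D) (𝓝[>] 0) (𝓝 (g x)) := by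
      have : Tendsto (fun t : ℝ => g x + t • D) (𝓝 0) (𝓝 (g x + (0:ℝ) • D)) :=
        (continuous_const.add (continuous_id.smul continuous_const)).tendsto 0
      simpa using this.mono_left nhdsWithin_le_nhds
    exact hc (hV.mem_nhds hgxV)
  have hbound : ∀ᶠ t in 𝓝[>] (0:ℝ),
      ‖q1 t - q2 t‖ ≤ K * ‖t⁻¹ • (g (x + t • v) - g x) - D‖ := by
    filter_upwards [hU', hV', self_mem_nhdsWithin] with t h1 h2 ht
    have ht' : (0:ℝ) < t := ht
    have htne : t ≠ 0 := ne_of_gt ht'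
    have heq : q1 t - q2 t = t⁻¹ • (f (g (x + t • v)) - f (g x + t • D)) := by
      simp only [hq1, hq2, smul_sub]
      abel
    rw [heq, norm_smul]
    have hlip : ‖f (g (x + t • v)) - f (g x + t • D)‖
        ≤ K * ‖g (x + t • v) - (g x + t • D)‖ := by
      have := hf.dist_le_mul _ (hgUV h1) _ h2
      simpa [dist_eq_norm] using this
    have hrw : g (x + t • v) - (g x + t • D) = t • (t⁻¹ • (g (x + t • v) - g x) - D) := by
      rw [smul_sub, smul_inv_smul₀ htne]
      abel
    calc ‖t⁻¹‖ * ‖f (g (x + t • v)) - f (g x + t • D)‖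
        ≤ ‖t⁻¹‖ * (K * ‖g (x + t • v) - (g x + t • D)‖) := by
          exact mul_le_mul_of_nonneg_left hlip (norm_nonneg _)
      _ = K * ‖t⁻¹ • (g (x + t • v) - g x) - D‖ := by
          rw [hrw, norm_smul, Real.norm_eq_abs, Real.norm_eq_abs,
            abs_of_pos ht', abs_of_pos (inv_pos.mpr ht')]
          field_simp
  have hlim0 : Tendsto (fun t : ℝ => (K : ℝ) * ‖t⁻¹ • (g (x + t • v) - g x) - D‖)
      (𝓝[>] 0) (𝓝 0) := by
    have : Tendsto (fun t : ℝ => t⁻¹ • (g (x + t • v) - g x) - D) (𝓝[>] 0) (𝓝 0) := by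
      simpa using hD.sub_const D
    have := this.norm
    simpa using (this.const_mul (K : ℝ))
  have key : Tendsto (fun t => q1 t - q2 t) (𝓝[>] (0:ℝ)) (𝓝 0) :=
    squeeze_zero_norm' hbound hlim0
  ext a
  constructor
  · rintro ⟨t, htpos, ht0, hta⟩
    refine ⟨t, htpos, ht0, ?_⟩
    have ht' : Tendsto t atTop (𝓝[>] (0:ℝ)) :=
      tendsto_nhdsWithin_of_tendsto_nhds_of_eventually_within t ht0
        (Eventually.of_forall fun n => htpos n)
    have hdiff : Tendsto (fun n => q1 (t n) - q2 (t n)) atTop (𝓝 0) := key.comp ht'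
    have hq1a : Tendsto (fun n => q1 (t n)) atTop (𝓝 a) := by
      simpa [hq1, Function.comp] using hta
    have := hq1a.sub hdiff
    simpa [hq2] using this
  · rintro ⟨t, htpos, ht0, hta⟩
    refine ⟨t, htpos, ht0, ?_⟩
    have ht' : Tendsto t atTop (𝓝[>] (0:ℝ)) :=
      tendsto_nhdsWithin_of_tendsto_nhds_of_eventually_within t ht0
        (Eventually.of_forall fun n => htpos n)
    have hdiff : Tendsto (fun n => q1 (t n) - q2 (t n)) atTop (𝓝 0) := key.comp ht'
    have hq2a : Tendsto (fun n => q2 (t n)) atTop (𝓝 a) := by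
      simpa [hq2, Function.comp] using hta
    have := hq2a.add hdiff
    simpa [hq1, Function.comp] using this
end

section
/- Let X and Y be real Banach spaces, U ⊆ X and V ⊆ Y nonempty open subsets, and let g : U → V and f : V → U be inverse homeomorphisms. Let x ∈ U. Assume g has a Gâteaux derivative at x, i.e., there is a continuous linear map D : X → Y such that for every v ∈ X, (g(x+tv) − g(x))/t → D(v) as t → 0⁺, and assume f is Lipschitz on V. Then for every v ∈ X, the derived set of f at g(x) in the direction D(v) is the singleton {v}; that is, 𝒟f(g(x), D(v)) = {v}. -/
open Filter Topology

private lemma keyLimit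
    {X Y : Type*} [NormedAddCommGroup X] [NormedSpace ℝ X] [CompleteSpace X]
    [NormedAddCommGroup Y] [NormedSpace ℝ Y] [CompleteSpace Y]
    {U : Set X} {V : Set Y} (hU : IsOpen U) (hUne : U.Nonempty)
    (hV : IsOpen V) (hVne : V.Nonempty)
    (g : X → Y) (f : Y → X)
    (hgc : ContinuousOn g U) (hfc : ContinuousOn f V)
    (hgUV : Set.MapsTo g U V) (hfVU : Set.MapsTo f V U)
    (hfg : ∀ x ∈ U, f (g x) = x) (hgf : ∀ y ∈ V, g (f y) = y)
    {x : X} (hx : x ∈ U) (D : X →L[ℝ] Y)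
    (hD : ∀ v : X, Tendsto (fun t : ℝ => t⁻¹ • (g (x + t • v) - g x)) (𝓝[>] 0) (𝓝 (D v)))
    {K : NNReal} (hf : LipschitzOnWith K f V) (v : X) :
    Tendsto (fun t : ℝ => t⁻¹ • (f (g x + t • D v) - f (g x))) (𝓝[>] 0) (𝓝 v) := by
  have hyV : g x ∈ V := hgUV hx
  have hfy : f (g x) = x := hfg x hx
  have hcont : Continuous fun t : ℝ => x + t • v := by continuity
  have h1 : ∀ᶠ t : ℝ in 𝓝[>] 0, x + t • v ∈ U := by
    have h0 : Tendsto (fun t : ℝ => x + t • v) (𝓝 0) (𝓝 x) := by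
      simpa using hcont.tendsto 0
    have : Tendsto (fun t : ℝ => x + t • v) (𝓝[>] 0) (𝓝 x) :=
      h0.mono_left nhdsWithin_le_nhds
    exact this.eventually_mem (hU.mem_nhds hx)
  have hcont2 : Continuous fun t : ℝ => g x + t • D v := by continuity
  have h2 : ∀ᶠ t : ℝ in 𝓝[>] 0, g x + t • D v ∈ V := by
    have h0 : Tendsto (fun t : ℝ => g x + t • D v) (𝓝 0) (𝓝 (g x)) := by
      simpa using hcont2.tendsto 0
    have : Tendsto (fun t : ℝ => g x + t • D v) (𝓝[>] 0) (𝓝 (g x)) :=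
      h0.mono_left nhdsWithin_le_nhds
    exact this.eventually_mem (hV.mem_nhds hyV)
  rw [tendsto_iff_norm_sub_tendsto_zero]
  have hbound : ∀ᶠ t : ℝ in 𝓝[>] 0,
      ‖t⁻¹ • (f (g x + t • D v) - f (g x)) - v‖ ≤
        K * ‖t⁻¹ • (g (x + t • v) - g x) - D v‖ := by
    filter_upwards [h1, h2, self_mem_nhdsWithin] with t htU htV ht
    have ht : (0:ℝ) < t := ht
    have hgV : g (x + t • v) ∈ V := hgUV htU
    have hfgx : f (g (x + t • v)) = x + t • v := hfg _ htU
    have hdist := hf.dist_le_mul _ htV _ hgV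
    rw [hfgx] at hdist
    have heq : t⁻¹ • (f (g x + t • D v) - f (g x)) - v
        = t⁻¹ • (f (g x + t • D v) - (x + t • v)) := by
      rw [hfy, smul_sub, smul_sub]
      have : t⁻¹ • (t • v) = v := by
        rw [smul_smul, inv_mul_cancel₀ ht.ne', one_smul]
      rw [smul_add, this]
      abel
    rw [heq]
    have heq2 : t⁻¹ • (g (x + t • v) - g x) - D v
        = t⁻¹ • (g (x + t • v) - (g x + t • D v)) := by
      rw [smul_sub, smul_sub]
      have : t⁻¹ • (t • D v) = D v := by
        rw [smul_smul, inv_mul_cancel₀ ht.ne', one_smul]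
      rw [smul_add, this]
      abel
    rw [heq2, norm_smul, norm_smul, Real.norm_eq_abs, abs_of_pos (inv_pos.2 ht),
      mul_left_comm]
    gcongr
    rw [← dist_eq_norm, ← dist_eq_norm, dist_comm (g (x + t • v))]
    exact hdist
  have hK : Tendsto (fun t : ℝ => (K:ℝ) * ‖t⁻¹ • (g (x + t • v) - g x) - D v‖)
      (𝓝[>] 0) (𝓝 0) := by
    have := ((hD v).sub (tendsto_const_nhds (x := D v))).norm
    simpa using this.const_mul (K:ℝ)
  exact squeeze_zero_norm' (hbound.mono fun t h => by simpa using h) hK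

/-- If `g : U → V` and `f : V → U` are inverse homeomorphisms, `g` has a
Gâteaux derivative `D` at `x ∈ U`, and `f` is Lipschitz on `V`, then for every `v`,
`𝒟 f (g x, D v) = {v}`. -/
theorem dirDerivedSet_inverse_eq_singleton
    {X Y : Type*} [NormedAddCommGroup X] [NormedSpace ℝ X] [CompleteSpace X]
    [NormedAddCommGroup Y] [NormedSpace ℝ Y] [CompleteSpace Y]
    {U : Set X} {V : Set Y} (hU : IsOpen U) (hUne : U.Nonempty)
    (hV : IsOpen V) (hVne : V.Nonempty)
    (g : X → Y) (f : Y → X)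
    (hgc : ContinuousOn g U) (hfc : ContinuousOn f V)
    (hgUV : Set.MapsTo g U V) (hfVU : Set.MapsTo f V U)
    (hfg : ∀ x ∈ U, f (g x) = x) (hgf : ∀ y ∈ V, g (f y) = y)
    {x : X} (hx : x ∈ U) (D : X →L[ℝ] Y)
    (hD : ∀ v : X, Tendsto (fun t : ℝ => t⁻¹ • (g (x + t • v) - g x)) (𝓝[>] 0) (𝓝 (D v)))
    {K : NNReal} (hf : LipschitzOnWith K f V) :
    ∀ v : X, dirDerivedSet f (g x) (D v) = {v} := by
  intro v
  have key := keyLimit hU hUne hV hVne g f hgc hfc hgUV hfVU hfg hgf hx D hD hf v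
  ext a
  simp only [Set.mem_singleton_iff, dirDerivedSet, Set.mem_setOf_eq]
  constructor
  · rintro ⟨t, htpos, ht0, hlim⟩
    have htmem : Tendsto t atTop (𝓝[>] (0:ℝ)) :=
      tendsto_nhdsWithin_of_tendsto_nhds_of_eventually_within _ ht0
        (Eventually.of_forall fun n => htpos n)
    exact tendsto_nhds_unique hlim (key.comp htmem)
  · rintro rfl
    refine ⟨fun n => (n+1:ℝ)⁻¹, fun n => by positivity, ?_, ?_⟩
    · have := tendsto_one_div_add_atTop_nhds_zero_nat (𝕜 := ℝ)
      simpa [one_div] using this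
    · refine key.comp (tendsto_nhdsWithin_of_tendsto_nhds_of_eventually_within _ ?_
        (Eventually.of_forall fun n => Set.mem_Ioi.mpr (by positivity)))
      have := tendsto_one_div_add_atTop_nhds_zero_nat (𝕜 := ℝ)
      simpa [one_div] using this
end

section
/- Let X and Y be real Banach spaces, U ⊆ X and V ⊆ Y nonempty open subsets, and let g : U → V and f : V → U be inverse homeomorphisms. Let x ∈ U. Assume g has a Gâteaux derivative D : X → Y at x (a continuous linear map with D(v) = lim_{t→0⁺}(g(x+tv) − g(x))/t for all v ∈ X), and assume f is Lipschitz on V. Then D is injective. -/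
open Filter Topology

/-- If `g : U → V` and `f : V → U` are inverse homeomorphisms, `g` has a Gâteaux
derivative `D` at `x ∈ U`, and `f` is Lipschitz on `V`, then `D` is injective. -/
theorem gateaux_deriv_injective
    {X Y : Type*} [NormedAddCommGroup X] [NormedSpace ℝ X] [CompleteSpace X]
    [NormedAddCommGroup Y] [NormedSpace ℝ Y] [CompleteSpace Y]
    {U : Set X} {V : Set Y} (hU : IsOpen U) (hUne : U.Nonempty)
    (hV : IsOpen V) (hVne : V.Nonempty)
    (g : X → Y) (f : Y → X)
    (hgc : ContinuousOn g U) (hfc : ContinuousOn f V)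
    (hgUV : Set.MapsTo g U V) (hfVU : Set.MapsTo f V U)
    (hfg : ∀ x ∈ U, f (g x) = x) (hgf : ∀ y ∈ V, g (f y) = y)
    {x : X} (hx : x ∈ U) (D : X →L[ℝ] Y)
    (hD : ∀ v : X, Tendsto (fun t : ℝ => t⁻¹ • (g (x + t • v) - g x)) (𝓝[>] 0) (𝓝 (D v)))
    {K : NNReal} (hf : LipschitzOnWith K f V) :
    Function.Injective D := by
  have key : ∀ v : X, D v = 0 → v = 0 := by
    intro v hv
    -- eventually x + t • v ∈ U for t near 0
    have hcont : Tendsto (fun t : ℝ => x + t • v) (𝓝[>] 0) (𝓝 x) := by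
      have : Tendsto (fun t : ℝ => x + t • v) (𝓝 0) (𝓝 (x + (0:ℝ) • v)) := by
        exact (tendsto_const_nhds.add ((continuous_id.smul continuous_const).tendsto 0))
      simpa using this.mono_left nhdsWithin_le_nhds
    have hmem : ∀ᶠ t : ℝ in 𝓝[>] 0, x + t • v ∈ U :=
      hcont.eventually (hU.eventually_mem hx)
    -- the bound ‖v‖ ≤ K * ‖t⁻¹ • (g (x+tv) - g x)‖ eventually
    have hbound : ∀ᶠ t : ℝ in 𝓝[>] 0,
        ‖v‖ ≤ (K : ℝ) * ‖t⁻¹ • (g (x + t • v) - g x)‖ := by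
      filter_upwards [hmem, self_mem_nhdsWithin] with t htU (ht : 0 < t)
      have h1 : g (x + t • v) ∈ V := hgUV htU
      have h2 : g x ∈ V := hgUV hx
      have hlip := hf h1 h2
      have hdist : dist (f (g (x + t • v))) (f (g x)) = t * ‖v‖ := by
        rw [hfg _ htU, hfg _ hx, dist_eq_norm]
        simp [norm_smul, abs_of_pos ht]
      have : t * ‖v‖ ≤ (K : ℝ) * ‖g (x + t • v) - g x‖ := by
        rw [← hdist]
        simpa [dist_eq_norm] using hf.dist_le_mul _ h1 _ h2
      calc ‖v‖ = t⁻¹ * (t * ‖v‖) := by field_simp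
        _ ≤ t⁻¹ * ((K : ℝ) * ‖g (x + t • v) - g x‖) := by
            exact mul_le_mul_of_nonneg_left ‹t * ‖v‖ ≤ _› (by positivity)
        _ = (K : ℝ) * ‖t⁻¹ • (g (x + t • v) - g x)‖ := by
            rw [norm_smul, norm_inv, Real.norm_eq_abs, abs_of_pos ht]; ring
    have hlim : Tendsto (fun t : ℝ => (K : ℝ) * ‖t⁻¹ • (g (x + t • v) - g x)‖)
        (𝓝[>] 0) (𝓝 ((K : ℝ) * ‖D v‖)) :=
      tendsto_const_nhds.mul ((hD v).norm)
    have h0 : ‖v‖ ≤ (K : ℝ) * ‖D v‖ :=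
      ge_of_tendsto hlim hbound
    rw [hv] at h0
    simp at h0
    exact norm_le_zero_iff.mp (by simpa using h0)
  intro a b hab
  have : D (a - b) = 0 := by simp [map_sub, hab]
  exact sub_eq_zero.mp (key _ this)
end

section
/- Let X and Y be real Banach spaces, U ⊆ X and V ⊆ Y nonempty open subsets, and let g : U → V and f : V → U be inverse homeomorphisms. Let x ∈ U and y = g(x). Assume g is Fréchet differentiable at x with Fréchet derivative dg_x : X → Y, and that f is Lipschitz on V. Then the image dg_x(X) is dense in Y. -/
open Filter Topology

/-- If `g : U → V` and `f : V → U` are inverse homeomorphisms, `g` is Fréchet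
differentiable at `x ∈ U` with derivative `dgx`, and `f` is Lipschitz on `V`, then the
image of `X` under `dgx` is dense in `Y`. -/
theorem frechet_deriv_denseRange
    {X Y : Type*} [NormedAddCommGroup X] [NormedSpace ℝ X] [CompleteSpace X]
    [NormedAddCommGroup Y] [NormedSpace ℝ Y] [CompleteSpace Y]
    {U : Set X} {V : Set Y} (hU : IsOpen U) (hUne : U.Nonempty)
    (hV : IsOpen V) (hVne : V.Nonempty)
    (g : X → Y) (f : Y → X)
    (hgc : ContinuousOn g U) (hfc : ContinuousOn f V)
    (hgUV : Set.MapsTo g U V) (hfVU : Set.MapsTo f V U)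
    (hfg : ∀ x ∈ U, f (g x) = x) (hgf : ∀ y ∈ V, g (f y) = y)
    {x : X} (hx : x ∈ U) (dgx : X →L[ℝ] Y) (hdgx : HasFDerivAt g dgx x)
    {K : NNReal} (hf : LipschitzOnWith K f V) :
    DenseRange (dgx : X → Y) := by
  rw [Metric.denseRange_iff]
  intro v ε hε
  have hgx : g x ∈ V := hgUV hx
  set ε' : ℝ := ε / (2 * (K * ‖v‖ + 1)) with hε'def
  have hKv : (0:ℝ) < (K:ℝ) * ‖v‖ + 1 := by positivity
  have hε' : 0 < ε' := by positivity
  have h1 := hdgx.isLittleO.def hε'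
  rw [Metric.eventually_nhds_iff] at h1
  obtain ⟨δ, hδ, hδ'⟩ := h1
  obtain ⟨r, hr, hrV⟩ := Metric.isOpen_iff.mp hV (g x) hgx
  have hmin : (0:ℝ) < min r δ := lt_min hr hδ
  set t : ℝ := min r δ / (2 * (((K:ℝ)+1) * (‖v‖+1))) with htdef
  have hden : (0:ℝ) < 2 * (((K:ℝ)+1) * (‖v‖+1)) := by positivity
  have ht : 0 < t := div_pos hmin hden
  have htv : t * ‖v‖ < r := by
    calc t * ‖v‖ ≤ t * (‖v‖ + 1) := by nlinarith [norm_nonneg v]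
    _ = min r δ * (‖v‖+1) / (2 * (((K:ℝ)+1) * (‖v‖+1))) := by ring
    _ ≤ min r δ / 2 := by
        rw [div_le_div_iff₀ hden (by norm_num)]
        nlinarith [norm_nonneg v, NNReal.coe_nonneg K, hmin.le,
          mul_nonneg (mul_nonneg hmin.le (NNReal.coe_nonneg K)) (by positivity : (0:ℝ) ≤ ‖v‖ + 1)]
    _ < r := by
        have := min_le_left r δ
        linarith
  have hKtv : (K:ℝ) * (t * ‖v‖) < δ := by
    calc (K:ℝ) * (t * ‖v‖) ≤ ((K:ℝ)+1) * (t * (‖v‖+1)) := by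
          nlinarith [norm_nonneg v, NNReal.coe_nonneg K, ht.le]
    _ = min r δ / 2 := by rw [htdef]; field_simp
    _ < δ := by
        have := min_le_right r δ
        linarith
  set w : Y := g x + t • v with hwdef
  have hwV : w ∈ V := by
    apply hrV
    simp only [Metric.mem_ball, hwdef, dist_eq_norm, add_sub_cancel_left, norm_smul,
      Real.norm_eq_abs, abs_of_pos ht]
    exact htv
  set u : X := f w - x with hudef
  have hnormu : ‖u‖ ≤ (K:ℝ) * (t * ‖v‖) := by
    have := hf.dist_le_mul w hwV (g x) hgx
    rw [hfg x hx] at this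
    calc ‖u‖ = dist (f w) (f (g x)) := by rw [dist_eq_norm, hudef, hfg x hx]
    _ ≤ (K:ℝ) * dist w (g x) := hf.dist_le_mul w hwV (g x) hgx
    _ = (K:ℝ) * (t * ‖v‖) := by
        rw [hwdef, dist_eq_norm, add_sub_cancel_left, norm_smul, Real.norm_eq_abs,
          abs_of_pos ht]
  have hgfw : g (f w) = w := hgf w hwV
  have hxu : x + u = f w := by rw [hudef]; abel
  have key2 : ‖t • v - dgx u‖ ≤ ε' * ‖u‖ := by
    have h := hδ' (y := x + u) (by
      rw [dist_eq_norm, add_sub_cancel_left]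
      exact lt_of_le_of_lt hnormu hKtv)
    rw [hxu, hgfw, show w - g x = t • v from by rw [hwdef]; abel, ← hudef] at h
    exact h
  refine ⟨t⁻¹ • u, ?_⟩
  rw [dist_eq_norm]
  have : v - dgx (t⁻¹ • u) = t⁻¹ • (t • v - dgx u) := by
    rw [map_smul, smul_sub, inv_smul_smul₀ ht.ne']
  rw [this, norm_smul, Real.norm_eq_abs, abs_of_pos (inv_pos.mpr ht)]
  calc t⁻¹ * ‖t • v - dgx u‖ ≤ t⁻¹ * (ε' * ((K:ℝ) * (t * ‖v‖))) := by
        apply mul_le_mul_of_nonneg_left _ (inv_pos.mpr ht).le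
        exact le_trans key2 (mul_le_mul_of_nonneg_left hnormu hε'.le)
  _ = ε' * ((K:ℝ) * ‖v‖) := by field_simp
  _ ≤ ε / 2 := by
      rw [hε'def, div_mul_eq_mul_div, div_le_div_iff₀ (by positivity) (by norm_num)]
      nlinarith [norm_nonneg v, NNReal.coe_nonneg K, hε.le]
  _ < ε := by linarith
end

section
/- (Converse of the inverse function theorem.) Let X and Y be real Banach spaces, U ⊆ X and V ⊆ Y nonempty open subsets, and let g : U → V and f : V → U be inverse homeomorphisms. Let x ∈ U. Assume g is Fréchet differentiable at x with Fréchet derivative dg_x : X → Y, and that f is Lipschitz on V. Then dg_x is a Banach space isomorphism from X onto Y; that is, dg_x is a bijective continuous linear map whose inverse is also continuous. -/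
open Filter Topology

/-- Converse of the inverse function theorem: if `g : U → V` and `f : V → U` are inverse
homeomorphisms between open subsets of Banach spaces, `g` is Fréchet differentiable at
`x ∈ U` with derivative `dgx`, and `f` is Lipschitz on `V`, then `dgx` is a Banach space
isomorphism of `X` onto `Y` (a bijective continuous linear map with continuous inverse). -/
theorem frechet_deriv_isomorphism
    {X Y : Type*} [NormedAddCommGroup X] [NormedSpace ℝ X] [CompleteSpace X]
    [NormedAddCommGroup Y] [NormedSpace ℝ Y] [CompleteSpace Y]
    {U : Set X} {V : Set Y} (hU : IsOpen U) (hUne : U.Nonempty)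
    (hV : IsOpen V) (hVne : V.Nonempty)
    (g : X → Y) (f : Y → X)
    (hgc : ContinuousOn g U) (hfc : ContinuousOn f V)
    (hgUV : Set.MapsTo g U V) (hfVU : Set.MapsTo f V U)
    (hfg : ∀ x ∈ U, f (g x) = x) (hgf : ∀ y ∈ V, g (f y) = y)
    {x : X} (hx : x ∈ U) (dgx : X →L[ℝ] Y) (hdgx : HasFDerivAt g dgx x)
    {K : NNReal} (hf : LipschitzOnWith K f V) :
    ∃ e : X ≃L[ℝ] Y, (e : X → Y) = (dgx : X → Y) := by
  have hgx : g x ∈ V := hgUV hx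
  -- the little-o estimate in metric form
  have hlo : ∀ ε > (0:ℝ), ∃ δ > (0:ℝ), ∀ x', ‖x' - x‖ < δ →
      ‖g x' - g x - dgx (x' - x)‖ ≤ ε * ‖x' - x‖ := by
    intro ε hε
    have h := hdgx.isLittleO.def hε
    rw [Metric.eventually_nhds_iff] at h
    obtain ⟨δ, hδ, hδ'⟩ := h
    exact ⟨δ, hδ, fun x' hx' => by simpa using hδ' (show dist x' x < δ by
      simpa [dist_eq_norm] using hx')⟩
  -- Step 1: ‖u‖ ≤ K * ‖dgx u‖ for all u
  have key : ∀ u : X, ‖u‖ ≤ (K : ℝ) * ‖dgx u‖ := by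
    intro u
    rcases eq_or_ne u 0 with rfl | hu
    · simp
    have hun : (0:ℝ) < ‖u‖ := norm_pos_iff.2 hu
    refine le_of_forall_pos_le_add fun ε hε => ?_
    set ε' : ℝ := ε / ((K + 1) * ‖u‖) with hε'def
    have hε' : 0 < ε' := div_pos hε (by positivity)
    obtain ⟨δ₁, hδ₁, hδ₁'⟩ := hlo ε' hε'
    obtain ⟨δ₂, hδ₂, hδ₂'⟩ := Metric.isOpen_iff.1 hU x hx
    set t : ℝ := min δ₁ δ₂ / (2 * ‖u‖) with htdef
    have ht : 0 < t := by positivity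
    set x' : X := x + t • u with hx'def
    have hxx' : x' - x = t • u := by simp [hx'def]
    have hnorm : ‖x' - x‖ = t * ‖u‖ := by
      rw [hxx', norm_smul, Real.norm_eq_abs, abs_of_pos ht]
    have hlt : ‖x' - x‖ < min δ₁ δ₂ := by
      rw [hnorm, htdef]
      rw [div_mul_eq_mul_div, div_lt_iff₀ (by positivity)]
      nlinarith [lt_min hδ₁ hδ₂]
    have hx'U : x' ∈ U := hδ₂' (by
      simpa [Metric.mem_ball, dist_eq_norm] using lt_of_lt_of_le hlt (min_le_right _ _))
    -- f (g x') = x', f (g x) = x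
    have h1 : ‖x' - x‖ ≤ K * ‖g x' - g x‖ := by
      have := hf.dist_le_mul (g x') (hgUV hx'U) (g x) hgx
      rw [hfg x' hx'U, hfg x hx] at this
      simpa [dist_eq_norm] using this
    have h2 : ‖g x' - g x‖ ≤ ‖dgx (x' - x)‖ + ε' * ‖x' - x‖ := by
      have := hδ₁' x' (lt_of_lt_of_le hlt (min_le_left _ _))
      have htri := norm_sub_norm_le (g x' - g x) (dgx (x' - x))
      linarith [htri.trans this]
    have h3 : ‖dgx (x' - x)‖ = t * ‖dgx u‖ := by
      rw [hxx', map_smul, norm_smul, Real.norm_eq_abs, abs_of_pos ht]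
    have h4 : t * ‖u‖ ≤ K * (t * ‖dgx u‖ + ε' * (t * ‖u‖)) := by
      calc t * ‖u‖ = ‖x' - x‖ := hnorm.symm
        _ ≤ K * ‖g x' - g x‖ := h1
        _ ≤ K * (‖dgx (x' - x)‖ + ε' * ‖x' - x‖) := by
            apply mul_le_mul_of_nonneg_left h2 K.coe_nonneg
        _ = K * (t * ‖dgx u‖ + ε' * (t * ‖u‖)) := by rw [h3, hnorm]
    have h5 : ‖u‖ ≤ K * ‖dgx u‖ + K * ε' * ‖u‖ := by
      have h4' : t * ‖u‖ ≤ t * ((K:ℝ) * ‖dgx u‖ + K * ε' * ‖u‖) := by nlinarith [h4]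
      exact le_of_mul_le_mul_left h4' ht
    have h6 : K * ε' * ‖u‖ ≤ ε := by
      rw [hε'def]
      rw [mul_comm (K:ℝ) _, mul_assoc, div_mul_eq_mul_div, div_le_iff₀ (by positivity)]
      nlinarith [K.coe_nonneg, hε.le, hun]
    linarith
  -- antilipschitz
  have hanti : AntilipschitzWith K dgx := dgx.antilipschitz_of_bound key
  have hinj : Function.Injective dgx := hanti.injective
  have hclosed : IsClosed (Set.range (dgx : X → Y)) :=
    hanti.isClosed_range dgx.uniformContinuous
  -- Step 2: surjectivity
  have hsurj : Function.Surjective dgx := by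
    intro v
    rcases eq_or_ne v 0 with rfl | hv
    · exact ⟨0, by simp⟩
    have hvn : (0:ℝ) < ‖v‖ := norm_pos_iff.2 hv
    have hmem : v ∈ closure (Set.range (dgx : X → Y)) := by
      rw [Metric.mem_closure_iff]
      intro ε hε
      set ε' : ℝ := ε / (2 * (K + 1) * ‖v‖) with hε'def
      have hε' : 0 < ε' := div_pos hε (by positivity)
      obtain ⟨δ₁, hδ₁, hδ₁'⟩ := hlo ε' hε'
      obtain ⟨δ₂, hδ₂, hδ₂'⟩ := Metric.isOpen_iff.1 hV (g x) hgx
      set s : ℝ := min (δ₂ / (2 * ‖v‖)) (δ₁ / ((K + 1) * ‖v‖)) with hsdef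
      have hs : 0 < s := lt_min (by positivity) (by positivity)
      set y : Y := g x + s • v with hydef
      have hyV : y ∈ V := by
        apply hδ₂'
        rw [Metric.mem_ball, dist_eq_norm]
        have : ‖y - g x‖ = s * ‖v‖ := by
          rw [hydef]; simp [norm_smul, Real.norm_eq_abs, abs_of_pos hs]
        rw [this]
        have hs' : s ≤ δ₂ / (2 * ‖v‖) := min_le_left _ _
        calc s * ‖v‖ ≤ (δ₂ / (2 * ‖v‖)) * ‖v‖ := by nlinarith
          _ < δ₂ := by rw [div_mul_eq_mul_div, div_lt_iff₀ (by positivity)]; nlinarith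
      set x' : X := f y with hx'def
      have hx'U : x' ∈ U := hfVU hyV
      have hgx' : g x' = y := hgf y hyV
      have hdist : ‖x' - x‖ ≤ K * (s * ‖v‖) := by
        have := hf.dist_le_mul y hyV (g x) hgx
        rw [hfg x hx] at this
        have hyg : dist y (g x) = s * ‖v‖ := by
          rw [dist_eq_norm, hydef]; simp [norm_smul, Real.norm_eq_abs, abs_of_pos hs]
        rw [hyg] at this
        simpa [hx'def, dist_eq_norm] using this
      have hlt : ‖x' - x‖ < δ₁ := by
        have hs' : s ≤ δ₁ / ((K + 1) * ‖v‖) := min_le_right _ _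
        have : (K:ℝ) * (s * ‖v‖) < δ₁ := by
          have h1 : (K:ℝ) * (s * ‖v‖) ≤ (K:ℝ) * ((δ₁ / ((K + 1) * ‖v‖)) * ‖v‖) :=
            mul_le_mul_of_nonneg_left (mul_le_mul_of_nonneg_right hs' hvn.le) K.coe_nonneg
          have h2 : (K:ℝ) * ((δ₁ / ((K + 1) * ‖v‖)) * ‖v‖) < δ₁ := by
            rw [div_mul_eq_mul_div, mul_div_assoc', div_lt_iff₀ (by positivity)]
            nlinarith [K.coe_nonneg]
          linarith
        linarith [hdist]
      have hest : ‖g x' - g x - dgx (x' - x)‖ ≤ ε' * ‖x' - x‖ := hδ₁' x' hlt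
      refine ⟨dgx (s⁻¹ • (x' - x)), Set.mem_range_self _, ?_⟩
      have hsv : g x' - g x = s • v := by rw [hgx', hydef]; abel
      rw [dist_eq_norm]
      have : v - dgx (s⁻¹ • (x' - x)) = s⁻¹ • (g x' - g x - dgx (x' - x)) := by
        rw [map_smul, hsv, smul_sub, smul_smul, inv_mul_cancel₀ hs.ne', one_smul]
      rw [this, norm_smul, Real.norm_eq_abs, abs_of_pos (inv_pos.2 hs)]
      calc s⁻¹ * ‖g x' - g x - dgx (x' - x)‖ ≤ s⁻¹ * (ε' * ‖x' - x‖) := by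
            apply mul_le_mul_of_nonneg_left hest (inv_pos.2 hs).le
        _ ≤ s⁻¹ * (ε' * (K * (s * ‖v‖))) := by
            apply mul_le_mul_of_nonneg_left _ (inv_pos.2 hs).le
            exact mul_le_mul_of_nonneg_left hdist hε'.le
        _ = ε' * (K * ‖v‖) := by field_simp
        _ < ε := by
            rw [hε'def, div_mul_eq_mul_div, div_lt_iff₀ (by positivity)]
            nlinarith [mul_pos hε hvn, K.coe_nonneg,
              mul_nonneg (mul_pos hε hvn).le K.coe_nonneg]
    rw [hclosed.closure_eq] at hmem
    exact hmem
  refine ⟨ContinuousLinearEquiv.ofBijective dgx (LinearMap.ker_eq_bot.2 hinj)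
    (LinearMap.range_eq_top.2 hsurj), ?_⟩
  exact ContinuousLinearEquiv.coeFn_ofBijective dgx _ _
end

section
/- Let X and Y be real Banach spaces, U ⊆ X and V ⊆ Y nonempty open subsets, and let g : U → V and f : V → U be inverse homeomorphisms. Let p be a natural number with p ≥ 1 (or p = ∞). Assume g is of class C^p on U (p times continuously Fréchet differentiable) and f is locally Lipschitz on V. Then f is of class C^p on V; in particular g and f are inverse C^p diffeomorphisms. -/
open Filter Topology Metric

set_option maxHeartbeats 1600000 in
/-- Global converse of the inverse function theorem: if `g : U → V` and `f : V → U` are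
inverse homeomorphisms between open subsets of Banach spaces, `g` is of class `C^p` on `U`
with `1 ≤ p`, and `f` is locally Lipschitz on `V`, then `f` is of class `C^p` on `V`
(so `g` and `f` are inverse `C^p` diffeomorphisms). -/
theorem contDiffOn_inverse_of_locally_lipschitz
    {X Y : Type*} [NormedAddCommGroup X] [NormedSpace ℝ X] [CompleteSpace X]
    [NormedAddCommGroup Y] [NormedSpace ℝ Y] [CompleteSpace Y]
    {U : Set X} {V : Set Y} (hU : IsOpen U) (hUne : U.Nonempty)
    (hV : IsOpen V) (hVne : V.Nonempty)
    (g : X → Y) (f : Y → X)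
    (hgc : ContinuousOn g U) (hfc : ContinuousOn f V)
    (hgUV : Set.MapsTo g U V) (hfVU : Set.MapsTo f V U)
    (hfg : ∀ x ∈ U, f (g x) = x) (hgf : ∀ y ∈ V, g (f y) = y)
    {p : ℕ∞} (hp : 1 ≤ p) (hg : ContDiffOn ℝ p g U)
    (hf : ∀ y ∈ V, ∃ t ⊆ V, IsOpen t ∧ y ∈ t ∧ ∃ K : NNReal, LipschitzOnWith K f t) :
    ContDiffOn ℝ p f V := by
  intro y hy
  obtain ⟨t, htV, htO, hyt, K, hK⟩ := hf y hy
  set x := f y with hxdef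
  have hxU : x ∈ U := hfVU hy
  have hgx : g x = y := hgf y hy
  have hgAt : ContDiffAt ℝ p g x := hg.contDiffAt (hU.mem_nhds hxU)
  have hgd : DifferentiableAt ℝ g x := hgAt.differentiableAt (by exact_mod_cast (show p ≠ 0 by rintro rfl; exact absurd hp (by norm_num)))
  set g' := fderiv ℝ g x with hg'def
  have hfd : HasFDerivAt g g' x := hgd.hasFDerivAt
  have hcg : ContinuousAt g x := hgAt.continuousAt
  -- a ball around x mapped into t, inside U
  have hmem : U ∩ g ⁻¹' t ∈ 𝓝 x := by
    refine Filter.inter_mem (hU.mem_nhds hxU) (hcg (htO.mem_nhds ?_))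
    rw [hgx]; exact hyt
  obtain ⟨δ, hδ0, hball⟩ := Metric.mem_nhds_iff.mp hmem
  -- antilipschitz bound on the ball
  have hanti : ∀ x₁ ∈ ball x δ, ∀ x₂ ∈ ball x δ, dist x₁ x₂ ≤ K * dist (g x₁) (g x₂) := by
    intro x₁ h₁ x₂ h₂
    have e₁ := hfg x₁ (hball h₁).1
    have e₂ := hfg x₂ (hball h₂).1
    calc dist x₁ x₂ = dist (f (g x₁)) (f (g x₂)) := by rw [e₁, e₂]
    _ ≤ K * dist (g x₁) (g x₂) := hK.dist_le_mul _ (hball h₁).2 _ (hball h₂).2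
  -- key: ‖w‖ ≤ K * ‖g' w‖
  have key : ∀ w : X, ‖w‖ ≤ K * ‖g' w‖ := by
    intro w
    rcases eq_or_ne w 0 with rfl | hw
    · simp
    have hwpos : (0:ℝ) < ‖w‖ := norm_pos_iff.mpr hw
    refine le_of_forall_pos_le_add fun ε' hε' => ?_
    set ε : ℝ := ε' / (K * ‖w‖ + 1) with hεdef
    have hεpos : 0 < ε := by positivity
    have hlo : ∀ᶠ x' in 𝓝 x, ‖g x' - g x - g' (x' - x)‖ ≤ ε * ‖x' - x‖ :=
      hfd.isLittleO.def hεpos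
    have htend : Tendsto (fun s : ℝ => x + s • w) (𝓝[>] 0) (𝓝 x) := by
      have : Tendsto (fun s : ℝ => x + s • w) (𝓝 0) (𝓝 (x + (0:ℝ) • w)) := by
        exact (tendsto_const_nhds.add ((continuous_id.smul continuous_const).tendsto 0))
      simpa using this.mono_left nhdsWithin_le_nhds
    have hev : ∀ᶠ s : ℝ in 𝓝[>] 0,
        (x + s • w ∈ ball x δ) ∧ ‖g (x + s • w) - g x - g' ((x + s • w) - x)‖ ≤ ε * ‖(x + s • w) - x‖ ∧ 0 < s := by
      filter_upwards [htend (Metric.ball_mem_nhds x hδ0), htend.eventually hlo,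
        self_mem_nhdsWithin] with s h1 h2 h3
      exact ⟨h1, h2, h3⟩
    obtain ⟨s, hs1, hs2, hs3⟩ := hev.exists
    have hxb : x ∈ ball x δ := Metric.mem_ball_self hδ0
    have hd : dist (x + s • w) x ≤ K * dist (g (x + s • w)) (g x) := hanti _ hs1 _ hxb
    have hsw : (x + s • w) - x = s • w := by abel
    rw [hsw] at hs2
    have h1 : ‖g (x + s • w) - g x‖ ≤ ‖g' (s • w)‖ + ε * ‖s • w‖ := by
      have := norm_sub_norm_le (g (x + s • w) - g x) (g' (s • w))
      calc ‖g (x + s • w) - g x‖ ≤ ‖g' (s • w)‖ + ‖g (x + s • w) - g x - g' (s • w)‖ := by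
            have := norm_add_le (g' (s • w)) (g (x + s • w) - g x - g' (s • w))
            simpa [add_sub_cancel] using this
      _ ≤ ‖g' (s • w)‖ + ε * ‖s • w‖ := by linarith [hs2]
    have hd' : ‖s • w‖ ≤ K * (‖g' (s • w)‖ + ε * ‖s • w‖) := by
      have : dist (x + s • w) x = ‖s • w‖ := by
        rw [dist_eq_norm, add_sub_cancel_left]
      rw [this] at hd
      have : dist (g (x + s • w)) (g x) = ‖g (x + s • w) - g x‖ := dist_eq_norm _ _
      rw [this] at hd
      exact hd.trans (by
        have hK0 : (0:ℝ) ≤ K := K.coe_nonneg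
        nlinarith [h1])
    have hs' : ‖s • w‖ = s * ‖w‖ := by
      rw [norm_smul, Real.norm_eq_abs, abs_of_pos hs3]
    have hgs : ‖g' (s • w)‖ = s * ‖g' w‖ := by
      rw [map_smul, norm_smul, Real.norm_eq_abs, abs_of_pos hs3]
    rw [hs', hgs] at hd'
    have hineq : ‖w‖ ≤ K * ‖g' w‖ + K * ε * ‖w‖ := by
      have := hd'
      have h2 : s * ‖w‖ ≤ s * (K * ‖g' w‖ + K * ε * ‖w‖) := by nlinarith [K.coe_nonneg]
      exact le_of_mul_le_mul_left (by linarith [h2]) hs3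
    have hfin : (K:ℝ) * ε * ‖w‖ ≤ ε' := by
      have hden : (0:ℝ) < K * ‖w‖ + 1 := by positivity
      have hmul : ε * ((K:ℝ) * ‖w‖ + 1) = ε' := div_mul_cancel₀ _ hden.ne'
      have h1 : (K:ℝ) * ‖w‖ ≤ (K:ℝ) * ‖w‖ + 1 := by linarith
      have h2 : ε * ((K:ℝ) * ‖w‖) ≤ ε * ((K:ℝ) * ‖w‖ + 1) :=
        mul_le_mul_of_nonneg_left h1 hεpos.le
      have h3 : (K:ℝ) * ε * ‖w‖ = ε * ((K:ℝ) * ‖w‖) := by ring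
      linarith
    linarith
  -- g' is antilipschitz, hence injective with closed range
  have hantiK : AntilipschitzWith K g' := g'.antilipschitz_of_bound key
  have hker : LinearMap.ker (g' : X →ₗ[ℝ] Y) = ⊥ := LinearMap.ker_eq_bot.mpr hantiK.injective
  have hclosed : IsClosed (Set.range g') :=
    hantiK.isClosed_range g'.uniformContinuous
  -- surjectivity via Riesz's lemma
  have hsurj : LinearMap.range (g' : X →ₗ[ℝ] Y) = ⊤ := by
    by_contra hne
    have hex : ∃ z : Y, z ∉ LinearMap.range (g' : X →ₗ[ℝ] Y) := by
      by_contra h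
      push_neg at h
      exact hne (Submodule.eq_top_iff'.mpr h)
    have hclosed' : IsClosed ((LinearMap.range (g' : X →ₗ[ℝ] Y) : Submodule ℝ Y) : Set Y) := by
      have : ((LinearMap.range (g' : X →ₗ[ℝ] Y) : Submodule ℝ Y) : Set Y) = Set.range g' := by
        ext z; simp [LinearMap.mem_range]
      rw [this]; exact hclosed
    obtain ⟨z, hzF, hzd⟩ := riesz_lemma hclosed' hex (r := 1/2) (by norm_num)
    have hz0 : z ≠ 0 := by
      intro h; exact hzF (h ▸ (LinearMap.range (g' : X →ₗ[ℝ] Y)).zero_mem)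
    have hzpos : (0:ℝ) < ‖z‖ := norm_pos_iff.mpr hz0
    -- choose ε with K * ε < 1/2
    set ε : ℝ := 1 / (4 * (K + 1)) with hεdef
    have hεpos : 0 < ε := by positivity
    have hKε : (K:ℝ) * ε < 1/2 := by
      have hKnn : (0:ℝ) ≤ K := K.coe_nonneg
      have hden : (0:ℝ) < 4*((K:ℝ)+1) := by positivity
      rw [hεdef, mul_one_div, div_lt_iff₀ hden]
      linarith
    have hlo : ∀ᶠ x' in 𝓝 x, ‖g x' - g x - g' (x' - x)‖ ≤ ε * ‖x' - x‖ :=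
      hfd.isLittleO.def hεpos
    -- f is continuous at y
    have hcf : ContinuousAt f y := (hK.continuousOn).continuousAt (htO.mem_nhds hyt)
    have htendy : Tendsto (fun ρ : ℝ => y + ρ • z) (𝓝[>] 0) (𝓝 y) := by
      have : Tendsto (fun ρ : ℝ => y + ρ • z) (𝓝 0) (𝓝 (y + (0:ℝ) • z)) :=
        tendsto_const_nhds.add ((continuous_id.smul continuous_const).tendsto 0)
      simpa using this.mono_left nhdsWithin_le_nhds
    have htendx : Tendsto (fun ρ : ℝ => f (y + ρ • z)) (𝓝[>] 0) (𝓝 x) := by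
      have : Tendsto (fun ρ : ℝ => f (y + ρ • z)) (𝓝[>] 0) (𝓝 (f y)) :=
        hcf.tendsto.comp htendy
      exact this
    have hev : ∀ᶠ ρ : ℝ in 𝓝[>] 0,
        (y + ρ • z ∈ t) ∧ (f (y + ρ • z) ∈ ball x δ) ∧
        ‖g (f (y + ρ • z)) - g x - g' (f (y + ρ • z) - x)‖ ≤ ε * ‖f (y + ρ • z) - x‖ ∧ 0 < ρ := by
      filter_upwards [htendy (htO.mem_nhds hyt), htendx (Metric.ball_mem_nhds x hδ0),
        htendx.eventually hlo, self_mem_nhdsWithin] with ρ h1 h2 h3 h4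
      exact ⟨h1, h2, h3, h4⟩
    obtain ⟨ρ, hρt, hρball, hρlo, hρpos⟩ := hev.exists
    set x' := f (y + ρ • z) with hx'def
    have hgx' : g x' = y + ρ • z := hgf _ (htV hρt)
    -- antilipschitz bound on the ball
    have hxb : x ∈ ball x δ := Metric.mem_ball_self hδ0
    have hdist : ‖x' - x‖ ≤ K * (ρ * ‖z‖) := by
      have := hanti x' hρball x hxb
      rw [dist_eq_norm, dist_eq_norm, hgx', hgx] at this
      have he : y + ρ • z - y = ρ • z := by abel
      rw [he, norm_smul, Real.norm_eq_abs, abs_of_pos hρpos] at this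
      exact this
    -- the error term
    have herr : ‖ρ • z - g' (x' - x)‖ ≤ ε * ((K:ℝ) * (ρ * ‖z‖)) := by
      have h1 := hρlo
      rw [hgx', hgx] at h1
      have he : y + ρ • z - y = ρ • z := by abel
      rw [he] at h1
      exact h1.trans (mul_le_mul_of_nonneg_left hdist hεpos.le)
    -- Riesz lemma contradiction
    have hmemF : g' (ρ⁻¹ • (x' - x)) ∈ (LinearMap.range (g' : X →ₗ[ℝ] Y) : Submodule ℝ Y) :=
      LinearMap.mem_range_self _ _
    have hr := hzd _ hmemF
    have heq : ‖z - g' (ρ⁻¹ • (x' - x))‖ = ρ⁻¹ * ‖ρ • z - g' (x' - x)‖ := by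
      rw [map_smul]
      have : z - ρ⁻¹ • g' (x' - x) = ρ⁻¹ • (ρ • z - g' (x' - x)) := by
        rw [smul_sub, smul_smul, inv_mul_cancel₀ hρpos.ne', one_smul]
      rw [this, norm_smul, Real.norm_eq_abs, abs_of_pos (inv_pos.mpr hρpos)]
    rw [heq] at hr
    have hfinal : (1/2) * ‖z‖ ≤ (K:ℝ) * ε * ‖z‖ := by
      have h2 : ρ⁻¹ * ‖ρ • z - g' (x' - x)‖ ≤ ρ⁻¹ * (ε * ((K:ℝ) * (ρ * ‖z‖))) :=
        mul_le_mul_of_nonneg_left herr (inv_pos.mpr hρpos).le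
      have h3 : ρ⁻¹ * (ε * ((K:ℝ) * (ρ * ‖z‖))) = (K:ℝ) * ε * ‖z‖ := by
        field_simp
      rw [h3] at h2
      linarith
    nlinarith
  -- assemble the continuous linear equivalence
  let e : X ≃L[ℝ] Y := ContinuousLinearEquiv.ofBijective g' hker hsurj
  -- the partial homeomorphism
  let Φ : OpenPartialHomeomorph X Y :=
    { toFun := g, invFun := f, source := U, target := V,
      map_source' := hgUV, map_target' := hfVU,
      left_inv' := hfg, right_inv' := hgf,
      open_source := hU, open_target := hV,
      continuousOn_toFun := hgc, continuousOn_invFun := hfc }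
  have hΦsymm : Φ.symm y = x := rfl
  have hderiv : HasFDerivAt Φ (e : X →L[ℝ] Y) (Φ.symm y) := by
    have : (e : X →L[ℝ] Y) = g' := ContinuousLinearEquiv.coe_ofBijective _ _ _
    rw [this, hΦsymm]
    exact hfd
  have hcd : ContDiffAt ℝ p (⇑Φ) (Φ.symm y) := hgAt
  have := Φ.contDiffAt_symm hy hderiv hcd
  exact this.contDiffWithinAt
end

section
/- Let X and Y be real Banach spaces, U ⊆ X and V ⊆ Y nonempty open subsets, and let g : U → V and f : V → U be inverse homeomorphisms. Let x ∈ U and y = g(x). Assume g is Fréchet differentiable at x with Fréchet derivative dg_x and that f is Lipschitz on V with Lipschitz constant M_f > 0. Then for every w ∈ Y and every ε > 0 there exists t > 0 such that y + tw ∈ V and, with z_t = (f(y+tw) − f(y))/t, one has ‖w − dg_x(z_t)‖ ≤ 2ε; consequently w lies in the closure of the range of dg_x. -/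
open Filter Topology

/-- If `g : U → V` and `f : V → U` are inverse homeomorphisms, `g` is Fréchet
differentiable at `x ∈ U` with derivative `dgx`, `y = g x`, and `f` is Lipschitz on `V`
with constant `M_f > 0`, then for every `w ∈ Y` and `ε > 0` there is `t > 0` with
`y + t • w ∈ V` and `‖w - dgx z_t‖ ≤ 2ε` where `z_t = (f (y + t • w) - f y) / t`;
consequently every `w` lies in the closure of the range of `dgx`. -/
theorem approx_in_range_of_frechet
    {X Y : Type*} [NormedAddCommGroup X] [NormedSpace ℝ X] [CompleteSpace X]
    [NormedAddCommGroup Y] [NormedSpace ℝ Y] [CompleteSpace Y]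
    {U : Set X} {V : Set Y} (hU : IsOpen U) (hUne : U.Nonempty)
    (hV : IsOpen V) (hVne : V.Nonempty)
    (g : X → Y) (f : Y → X)
    (hgc : ContinuousOn g U) (hfc : ContinuousOn f V)
    (hgUV : Set.MapsTo g U V) (hfVU : Set.MapsTo f V U)
    (hfg : ∀ x ∈ U, f (g x) = x) (hgf : ∀ y ∈ V, g (f y) = y)
    {x : X} (hx : x ∈ U) {y : Y} (hy : y = g x)
    (dgx : X →L[ℝ] Y) (hdgx : HasFDerivAt g dgx x)
    {Mf : NNReal} (hMf : 0 < Mf) (hf : LipschitzOnWith Mf f V) :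
    (∀ w : Y, ∀ ε > (0 : ℝ), ∃ t > (0 : ℝ), y + t • w ∈ V ∧
      ‖w - dgx (t⁻¹ • (f (y + t • w) - f y))‖ ≤ 2 * ε) ∧
    ∀ w : Y, w ∈ closure (Set.range (dgx : X → Y)) := by
  have hyV : y ∈ V := hy ▸ hgUV hx
  have hfyx : f y = x := by rw [hy, hfg x hx]
  have hMf' : (0:ℝ) < (Mf : ℝ) := hMf
  have main : ∀ w : Y, ∀ ε > (0 : ℝ), ∃ t > (0 : ℝ), y + t • w ∈ V ∧
      ‖w - dgx (t⁻¹ • (f (y + t • w) - f y))‖ ≤ ε := by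
    intro w ε hε
    obtain ⟨r, hr, hrV⟩ := Metric.isOpen_iff.mp hV y hyV
    set c : ℝ := ε / ((Mf : ℝ) * (‖w‖ + 1)) with hc
    have hw1 : (0:ℝ) < ‖w‖ + 1 := by positivity
    have hcpos : 0 < c := by positivity
    have hlo := (hasFDerivAt_iff_isLittleO_nhds_zero.mp hdgx).def hcpos
    obtain ⟨δ, hδ, hδb⟩ := Metric.eventually_nhds_iff_ball.mp hlo
    set t : ℝ := (1/2) * min (r / (‖w‖ + 1)) (δ / ((Mf : ℝ) * (‖w‖ + 1))) with ht
    have htpos : 0 < t := by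
      apply mul_pos (by norm_num)
      apply lt_min (by positivity) (by positivity)
    have ht1 : t * (‖w‖ + 1) ≤ (1/2) * r := by
      have : t ≤ (1/2) * (r / (‖w‖ + 1)) := by
        rw [ht]; gcongr; exact min_le_left _ _
      calc t * (‖w‖ + 1) ≤ (1/2) * (r / (‖w‖ + 1)) * (‖w‖ + 1) := by gcongr
        _ = (1/2) * r := by field_simp
    have ht2 : (Mf : ℝ) * (t * (‖w‖ + 1)) ≤ (1/2) * δ := by
      have : t ≤ (1/2) * (δ / ((Mf : ℝ) * (‖w‖ + 1))) := by
        rw [ht]; gcongr; exact min_le_right _ _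
      calc (Mf : ℝ) * (t * (‖w‖ + 1)) ≤ (Mf : ℝ) * ((1/2) * (δ / ((Mf : ℝ) * (‖w‖ + 1))) * (‖w‖ + 1)) := by gcongr
        _ = (1/2) * δ := by field_simp
    have hmem : y + t • w ∈ V := by
      apply hrV
      rw [Metric.mem_ball, dist_eq_norm, add_sub_cancel_left, norm_smul,
        Real.norm_eq_abs, abs_of_pos htpos]
      calc t * ‖w‖ ≤ t * (‖w‖ + 1) := by nlinarith
        _ ≤ (1/2) * r := ht1
        _ < r := by linarith
    refine ⟨t, htpos, hmem, ?_⟩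
    set u : X := f (y + t • w) - f y with hu
    have hunorm : ‖u‖ ≤ (Mf : ℝ) * (t * ‖w‖) := by
      have := hf.dist_le_mul (y + t • w) hmem y hyV
      rw [dist_eq_norm] at this
      simpa [hu, dist_eq_norm, norm_smul, abs_of_pos htpos] using this
    have huball : u ∈ Metric.ball (0:X) δ := by
      simp only [Metric.mem_ball, dist_zero_right]
      calc ‖u‖ ≤ (Mf : ℝ) * (t * ‖w‖) := hunorm
        _ ≤ (Mf : ℝ) * (t * (‖w‖ + 1)) := by gcongr; linarith
        _ ≤ (1/2) * δ := ht2
        _ < δ := by linarith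
    have hgxu : g (x + u) = y + t • w := by
      have : x + u = f (y + t • w) := by rw [hu, hfyx]; abel
      rw [this, hgf _ hmem]
    have hkey : ‖t • w - dgx u‖ ≤ c * ‖u‖ := by
      have := hδb u huball
      simp only [hgxu, ← hy] at this
      simpa [add_sub_cancel_left] using this
    have heq : w - dgx (t⁻¹ • u) = t⁻¹ • (t • w - dgx u) := by
      rw [smul_sub t⁻¹ (t • w) (dgx u), map_smul, smul_smul, inv_mul_cancel₀ htpos.ne', one_smul]
    rw [heq, norm_smul_of_nonneg (by positivity : (0:ℝ) ≤ t⁻¹)]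
    calc t⁻¹ * ‖t • w - dgx u‖ ≤ t⁻¹ * (c * ‖u‖) := by gcongr
      _ ≤ t⁻¹ * (c * ((Mf : ℝ) * (t * (‖w‖ + 1)))) := by
          gcongr
          calc ‖u‖ ≤ (Mf : ℝ) * (t * ‖w‖) := hunorm
            _ ≤ (Mf : ℝ) * (t * (‖w‖ + 1)) := by gcongr; linarith
      _ = t⁻¹ * (ε * t) := by
          rw [hc]; congr 1; field_simp
      _ = ε := by field_simp
  constructor
  · intro w ε hε
    obtain ⟨t, htpos, hmem, hb⟩ := main w ε hε
    exact ⟨t, htpos, hmem, hb.trans (by linarith)⟩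
  · intro w
    rw [Metric.mem_closure_iff]
    intro ε hε
    obtain ⟨t, htpos, hmem, hb⟩ := main w (ε/2) (by linarith)
    exact ⟨dgx (t⁻¹ • (f (y + t • w) - f y)), Set.mem_range_self _,
      by rw [dist_eq_norm]; linarith⟩
end

section
/- Let X and Y be real Banach spaces, U ⊆ X and V ⊆ Y nonempty open subsets, and let g : U → V and f : V → U be inverse homeomorphisms. Let x ∈ U and y = g(x). Assume g is Fréchet differentiable at x with Fréchet derivative dg_x : X → Y, and that f is Lipschitz on V with Lipschitz constant M_f. Then there exists a continuous linear map S : Y → X with operator norm ‖S‖ ≤ M_f such that S(dg_x(v)) = v for every v ∈ X; that is, dg_x admits a bounded linear left inverse of norm at most M_f. -/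
open Filter Topology

/-- If `g : U → V` and `f : V → U` are inverse homeomorphisms, `g` is Fréchet
differentiable at `x ∈ U` with derivative `dgx`, and `f` is Lipschitz on `V` with
constant `M_f`, then `dgx` admits a bounded linear left inverse `S : Y → X` with
operator norm `‖S‖ ≤ M_f`. -/
theorem exists_left_inverse_of_frechet
    {X Y : Type*} [NormedAddCommGroup X] [NormedSpace ℝ X] [CompleteSpace X]
    [NormedAddCommGroup Y] [NormedSpace ℝ Y] [CompleteSpace Y]
    {U : Set X} {V : Set Y} (hU : IsOpen U) (hUne : U.Nonempty)
    (hV : IsOpen V) (hVne : V.Nonempty)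
    (g : X → Y) (f : Y → X)
    (hgc : ContinuousOn g U) (hfc : ContinuousOn f V)
    (hgUV : Set.MapsTo g U V) (hfVU : Set.MapsTo f V U)
    (hfg : ∀ x ∈ U, f (g x) = x) (hgf : ∀ y ∈ V, g (f y) = y)
    {x : X} (hx : x ∈ U) (dgx : X →L[ℝ] Y) (hdgx : HasFDerivAt g dgx x)
    {Mf : NNReal} (hf : LipschitzOnWith Mf f V) :
    ∃ S : Y →L[ℝ] X, ‖S‖ ≤ Mf ∧ ∀ v : X, S (dgx v) = v := by
  set y : Y := g x with hy
  have hyV : y ∈ V := hgUV hx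
  have hfy : f y = x := hfg x hx
  -- Step 1: `dgx` is bounded below: `‖v‖ ≤ Mf * ‖dgx v‖`.
  have key : ∀ v : X, ‖v‖ ≤ Mf * ‖dgx v‖ := by
    intro v
    have hline : HasDerivAt (fun t : ℝ => g (x + t • v)) (dgx v) 0 :=
      hdgx.hasLineDerivAt v
    have hs : Tendsto (slope (fun t : ℝ => g (x + t • v)) 0) (𝓝[≠] (0:ℝ)) (𝓝 (dgx v)) :=
      hasDerivAt_iff_tendsto_slope.mp hline
    have hs' : Tendsto (fun t : ℝ => (Mf : ℝ) * ‖slope (fun t : ℝ => g (x + t • v)) 0 t‖)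
        (𝓝[>] (0:ℝ)) (𝓝 ((Mf : ℝ) * ‖dgx v‖)) :=
      ((hs.mono_left (nhdsWithin_mono _ fun t ht => ne_of_gt ht)).norm).const_mul _
    refine ge_of_tendsto hs' ?_
    have hcont : Tendsto (fun t : ℝ => x + t • v) (𝓝 0) (𝓝 x) := by
      have : Continuous fun t : ℝ => x + t • v := by continuity
      simpa using this.tendsto 0
    have hmemU : ∀ᶠ t : ℝ in 𝓝[>] (0:ℝ), x + t • v ∈ U :=
      eventually_nhdsWithin_of_eventually_nhds (hcont.eventually (hU.mem_nhds hx))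
    filter_upwards [hmemU, self_mem_nhdsWithin] with t hmem (ht : 0 < t)
    have hd := hf.dist_le_mul (g (x + t • v)) (hgUV hmem) (g x) hyV
    rw [hfg _ hmem, hfg _ hx] at hd
    have h1 : dist (x + t • v) x = t * ‖v‖ := by
      rw [dist_eq_norm]
      simp [norm_smul, abs_of_pos ht]
    have h2 : ‖slope (fun t : ℝ => g (x + t • v)) 0 t‖
        = t⁻¹ * ‖g (x + t • v) - g x‖ := by
      rw [slope_def_module]
      simp [norm_smul, abs_of_pos ht]
    rw [h1, dist_eq_norm] at hd
    rw [h2]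
    have ht' : 0 < t⁻¹ := inv_pos.mpr ht
    calc ‖v‖ = t⁻¹ * (t * ‖v‖) := by field_simp
      _ ≤ t⁻¹ * ((Mf : ℝ) * ‖g (x + t • v) - g x‖) := by
          exact mul_le_mul_of_nonneg_left hd ht'.le
      _ = (Mf : ℝ) * (t⁻¹ * ‖g (x + t • v) - g x‖) := by ring
  have hanti : AntilipschitzWith Mf dgx := by
    refine AntilipschitzWith.of_le_mul_dist fun a b => ?_
    have := key (a - b)
    simpa [dist_eq_norm, map_sub] using this
  -- Step 2: `dgx` is surjective.
  have hclosed : IsClosed (Set.range (⇑dgx)) :=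
    hanti.isClosed_range dgx.uniformContinuous
  have hsurj : Function.Surjective (⇑dgx) := by
    intro w
    have : w ∈ closure (Set.range (⇑dgx)) := by
      rw [Metric.mem_closure_iff]
      intro ε hε
      set c : ℝ := ε / ((Mf : ℝ) * ‖w‖ + 1) with hc
      have hden : (0:ℝ) < (Mf : ℝ) * ‖w‖ + 1 := by positivity
      have hcpos : 0 < c := div_pos hε hden
      have hbound : ∀ᶠ x' in 𝓝 x, ‖g x' - g x - dgx (x' - x)‖ ≤ c * ‖x' - x‖ :=
        hdgx.isLittleO.def hcpos
      -- the curve t ↦ f (y + t • w)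
      have hcurve : Tendsto (fun t : ℝ => y + t • w) (𝓝 0) (𝓝 y) := by
        have : Continuous fun t : ℝ => y + t • w := by continuity
        simpa using this.tendsto 0
      have hmemV : ∀ᶠ t : ℝ in 𝓝[>] (0:ℝ), y + t • w ∈ V :=
        eventually_nhdsWithin_of_eventually_nhds (hcurve.eventually (hV.mem_nhds hyV))
      have hψ : Tendsto (fun t : ℝ => f (y + t • w)) (𝓝[>] (0:ℝ)) (𝓝 x) := by
        have h1 : Tendsto (fun t : ℝ => y + t • w) (𝓝[>] (0:ℝ)) (𝓝[V] y) :=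
          tendsto_nhdsWithin_iff.mpr ⟨hcurve.mono_left nhdsWithin_le_nhds, hmemV⟩
        have h2 : Tendsto f (𝓝[V] y) (𝓝 x) := by
          have := (hfc y hyV).tendsto
          rwa [hfy] at this
        exact h2.comp h1
      have hevb : ∀ᶠ t : ℝ in 𝓝[>] (0:ℝ),
          ‖g (f (y + t • w)) - g x - dgx (f (y + t • w) - x)‖
            ≤ c * ‖f (y + t • w) - x‖ := hψ.eventually hbound
      obtain ⟨t, hmemV', hb, (ht : 0 < t)⟩ :=
        (hmemV.and (hevb.and self_mem_nhdsWithin)).exists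
      set x' : X := f (y + t • w) with hx'
      have hgx' : g x' = y + t • w := hgf _ hmemV'
      have hlip : ‖x' - x‖ ≤ (Mf : ℝ) * (t * ‖w‖) := by
        have hd := hf.dist_le_mul (y + t • w) hmemV' y hyV
        rw [hfy] at hd
        have : dist (y + t • w) y = t * ‖w‖ := by
          rw [dist_eq_norm]; simp [norm_smul, abs_of_pos ht]
        rw [dist_eq_norm, this] at hd
        exact hd
      have hb' : ‖t • w - dgx (x' - x)‖ ≤ c * ((Mf : ℝ) * (t * ‖w‖)) := by
        rw [hgx', ← hy] at hb
        have : y + t • w - y = t • w := by abel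
        rw [this] at hb
        exact hb.trans (mul_le_mul_of_nonneg_left hlip hcpos.le)
      refine ⟨dgx (t⁻¹ • (x' - x)), Set.mem_range_self _, ?_⟩
      have hne : t ≠ 0 := ht.ne'
      have hrw : w - dgx (t⁻¹ • (x' - x)) = t⁻¹ • (t • w - dgx (x' - x)) := by
        rw [map_smul, smul_sub, smul_smul, inv_mul_cancel₀ hne, one_smul]
      rw [dist_eq_norm, hrw]
      have : ‖t⁻¹ • (t • w - dgx (x' - x))‖ = t⁻¹ * ‖t • w - dgx (x' - x)‖ := by
        simp [norm_smul, abs_of_pos ht]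
      rw [this]
      have hlt : c * ((Mf : ℝ) * ‖w‖) < ε := by
        rw [hc]
        calc ε / ((Mf : ℝ) * ‖w‖ + 1) * ((Mf : ℝ) * ‖w‖)
            < ε / ((Mf : ℝ) * ‖w‖ + 1) * ((Mf : ℝ) * ‖w‖ + 1) := by
              apply mul_lt_mul_of_pos_left (by linarith) (div_pos hε hden)
          _ = ε := by field_simp
      calc t⁻¹ * ‖t • w - dgx (x' - x)‖
          ≤ t⁻¹ * (c * ((Mf : ℝ) * (t * ‖w‖))) :=
            mul_le_mul_of_nonneg_left hb' (inv_pos.mpr ht).le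
        _ = c * ((Mf : ℝ) * ‖w‖) := by field_simp
        _ < ε := hlt
    rwa [hclosed.closure_eq] at this
  -- Step 3: build the inverse.
  have hker : LinearMap.ker (dgx : X →ₗ[ℝ] Y) = ⊥ := (LinearMap.ker_eq_bot (f := (dgx : X →ₗ[ℝ] Y))).mpr hanti.injective
  have hrange : LinearMap.range (dgx : X →ₗ[ℝ] Y) = ⊤ := (LinearMap.range_eq_top (f := (dgx : X →ₗ[ℝ] Y))).mpr hsurj
  set e := ContinuousLinearEquiv.ofBijective dgx hker hrange with he
  refine ⟨(e.symm : Y →L[ℝ] X), ?_, ?_⟩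
  · refine ContinuousLinearMap.opNorm_le_bound _ Mf.coe_nonneg fun w => ?_
    have h1 := key (e.symm w)
    have h2 : dgx (e.symm w) = w :=
      ContinuousLinearEquiv.ofBijective_apply_symm_apply dgx hker hrange w
    rw [h2] at h1
    simpa using h1
  · intro v
    exact ContinuousLinearEquiv.ofBijective_symm_apply_apply dgx hker hrange v
end
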